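/- Let m ≥ 1, q ∈ ℝ^m, and 0 < T̃ < T. Let Ω be a subset of the open ball B(q, T̃), and let a, b, c : ℝ^m → ℝ be continuous on the closed ball B̄(q,T), with b(x) > 0 and c(x) ≥ 0 on B̄(q,T), and let σ > 1, τ < 1. Then there exists a constant C > 0, independent of u, such that every positive function u which is C² on the closed ball B̄(q,T) and satisfies Δu + a(x)u − b(x)u^σ + c(x)u^τ ≥ 0 on B(q,T) obeys sup_Ω u ≤ C. -/

import Mathlib

open Real Set Metric Filter

section Helpers

lemma second_deriv_nonpos_of_isLocalMax {g g' : ℝ → ℝ} {d2 : ℝ}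
    (hg' : ∀ᶠ t in nhds (0:ℝ), HasDerivAt g (g' t) t)
    (hg'' : HasDerivAt g' d2 0)
    (hmax : IsLocalMax g 0) : d2 ≤ 0 := by
  by_contra hpos
  push_neg at hpos
  have h0 : g' 0 = 0 := hmax.hasDerivAt_eq_zero hg'.self_of_nhds
  -- slope of g' tends to d2 > 0, so g' > 0 on a right interval
  have hslope : Tendsto (slope g' 0) (nhdsWithin 0 {(0:ℝ)}ᶜ) (nhds d2) :=
    hasDerivAt_iff_tendsto_slope.mp hg''
  have hslope' : Tendsto (slope g' 0) (nhdsWithin 0 (Ioi 0)) (nhds d2) :=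
    hslope.mono_left (nhdsWithin_mono _ (fun t ht => ne_of_gt ht))
  have hev : ∀ᶠ t in nhdsWithin (0:ℝ) (Ioi 0), 0 < slope g' 0 t :=
    hslope'.eventually (eventually_gt_nhds hpos)
  have hev2 : ∀ᶠ t in nhdsWithin (0:ℝ) (Ioi 0), 0 < g' t := by
    filter_upwards [hev, self_mem_nhdsWithin] with t ht ht'
    have h1 : (0:ℝ) < t⁻¹ * (g' t - g' 0) := by simpa [slope_def_field, slope] using ht
    rw [h0, sub_zero] at h1
    have h2 := mul_pos (show (0:ℝ) < t from ht') h1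
    rwa [← mul_assoc, mul_inv_cancel₀ (ne_of_gt ht'), one_mul] at h2
  rw [eventually_iff, mem_nhdsGT_iff_exists_Ioo_subset] at hev2
  obtain ⟨δ, hδpos, hδ⟩ := hev2
  obtain ⟨ε, hεpos, hε⟩ := Metric.eventually_nhds_iff.mp (hg'.and hmax)
  set r := min (ε/2) (δ/2) with hr
  have hrpos : 0 < r := lt_min (half_pos hεpos) (half_pos hδpos)
  have hrε : ∀ t ∈ Icc (0:ℝ) r, HasDerivAt g (g' t) t ∧ g t ≤ g 0 := by
    intro t ht
    apply hε
    rw [Real.dist_eq, sub_zero, abs_of_nonneg ht.1]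
    exact lt_of_le_of_lt (ht.2.trans (min_le_left _ _)) (half_lt_self hεpos)
  have hmono : StrictMonoOn g (Icc (0:ℝ) r) := by
    apply strictMonoOn_of_deriv_pos (convex_Icc _ _)
    · intro t ht
      exact ((hrε t ht).1).continuousAt.continuousWithinAt
    · intro t ht
      rw [interior_Icc] at ht
      have htm : t ∈ Ioo (0:ℝ) δ := ⟨ht.1, lt_of_lt_of_le ht.2
        ((min_le_right _ _).trans (le_of_lt (half_lt_self hδpos)))⟩
      rw [((hrε t ⟨le_of_lt ht.1, le_of_lt ht.2⟩).1).deriv]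
      exact hδ htm
  have h1 : g 0 < g r := hmono (left_mem_Icc.2 hrpos.le) (right_mem_Icc.2 hrpos.le) hrpos
  exact absurd (hrε r (right_mem_Icc.2 hrpos.le)).2 (not_le.2 h1)


variable {E : Type*} [NormedAddCommGroup E] [NormedSpace ℝ E]

lemma line_hasDerivAt {u : E → ℝ} {x₀ : E} (e : E) {t : ℝ}
    (hu : DifferentiableAt ℝ u (x₀ + t • e)) :
    HasDerivAt (fun t => u (x₀ + t • e)) (fderiv ℝ u (x₀ + t • e) e) t := by
  have hl : HasDerivAt (fun t : ℝ => x₀ + t • e) e t := by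
    simpa using ((hasDerivAt_id t).smul_const e).const_add x₀
  exact (hu.hasFDerivAt.comp_hasDerivAt t hl)

lemma line_hasDerivAt_fderiv {u : E → ℝ} {s : Set E} (hs : IsOpen s) {x₀ : E}
    (hx : x₀ ∈ s) (hu : ContDiffOn ℝ 2 u s) (e : E) :
    HasDerivAt (fun t : ℝ => fderiv ℝ u (x₀ + t • e) e)
      (iteratedFDeriv ℝ 2 u x₀ ![e, e]) 0 := by
  have hf1 : ContDiffOn ℝ 1 (fderiv ℝ u) s := by
    have := ContDiffOn.fderiv_of_isOpen (m := 1) (n := 2) hu hs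
    exact this (by norm_num)
  have hdiff : DifferentiableAt ℝ (fderiv ℝ u) x₀ :=
    ((hf1.differentiableOn one_ne_zero) x₀ hx).differentiableAt (hs.mem_nhds hx)
  have hl : HasDerivAt (fun t : ℝ => x₀ + t • e) e 0 := by
    simpa using ((hasDerivAt_id (0:ℝ)).smul_const e).const_add x₀
  have hdiff' : HasFDerivAt (fderiv ℝ u) (fderiv ℝ (fderiv ℝ u) x₀) (x₀ + (0:ℝ) • e) := by
    rw [zero_smul, add_zero]; exact hdiff.hasFDerivAt
  have hcomp : HasDerivAt (fun t : ℝ => fderiv ℝ u (x₀ + t • e))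
      (fderiv ℝ (fderiv ℝ u) x₀ e) 0 := by
    simpa only [Function.comp_def] using hdiff'.comp_hasDerivAt 0 hl
  have happ := (ContinuousLinearMap.apply ℝ ℝ e).hasFDerivAt.comp_hasDerivAt 0 hcomp
  rw [iteratedFDeriv_two_apply]
  simpa only [Function.comp_def, ContinuousLinearMap.apply_apply, Matrix.cons_val_zero,
    Matrix.cons_val_one, Matrix.head_cons] using happ


end Helpers

/-- The Euclidean Laplacian: trace of the Hessian. -/
noncomputable def lap {m : ℕ} (u : EuclideanSpace ℝ (Fin m) → ℝ)
    (x : EuclideanSpace ℝ (Fin m)) : ℝ :=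
  ∑ i : Fin m, iteratedFDeriv ℝ 2 u x ![EuclideanSpace.single i 1, EuclideanSpace.single i 1]

/-- Local a priori estimate: positive solutions of the Lichnerowicz differential
inequality on a ball are uniformly bounded on interior subsets. -/
theorem lichnerowicz_local_apriori {m : ℕ} (hm : 1 ≤ m)
    (q : EuclideanSpace ℝ (Fin m)) (T' T : ℝ) (hT'0 : 0 < T') (hT'T : T' < T)
    (Ω : Set (EuclideanSpace ℝ (Fin m))) (hΩ : Ω ⊆ Metric.ball q T')
    (a b c : EuclideanSpace ℝ (Fin m) → ℝ)
    (ha : ContinuousOn a (Metric.closedBall q T))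
    (hb : ContinuousOn b (Metric.closedBall q T))
    (hc : ContinuousOn c (Metric.closedBall q T))
    (hbpos : ∀ x ∈ Metric.closedBall q T, 0 < b x)
    (hcpos : ∀ x ∈ Metric.closedBall q T, 0 ≤ c x)
    (σ τ : ℝ) (hσ : 1 < σ) (hτ : τ < 1) :
    ∃ C : ℝ, 0 < C ∧
      ∀ u : EuclideanSpace ℝ (Fin m) → ℝ,
        ContDiffOn ℝ 2 u (Metric.closedBall q T) →
        (∀ x ∈ Metric.closedBall q T, 0 < u x) →
        (∀ x ∈ Metric.ball q T,
          0 ≤ lap u x + a x * u x - b x * u x ^ σ + c x * u x ^ τ) →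
        ∀ x ∈ Ω, u x ≤ C := by
  have hT0 : 0 < T := hT'0.trans hT'T
  have hσ1 : (0:ℝ) < σ - 1 := by linarith
  set κ : ℝ := 2 / (σ - 1) with hκdef
  have hκ : 0 < κ := by positivity
  have hκσ : κ * σ = κ + 2 := by
    rw [hκdef, div_mul_eq_mul_div, div_add' _ _ _ hσ1.ne', div_left_inj' hσ1.ne']; ring
  set K : Set (EuclideanSpace ℝ (Fin m)) := Metric.closedBall q T with hK
  have hqK : q ∈ K := by simp [hK, hT0.le]
  have hKc : IsCompact K := isCompact_closedBall q T
  -- extremes of the coefficients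
  obtain ⟨xb, hxbK, hxbmin⟩ := hKc.exists_isMinOn ⟨q, hqK⟩ hb
  set b₀ : ℝ := b xb with hb₀def
  have hb₀ : 0 < b₀ := hbpos xb hxbK
  have hb₀le : ∀ x ∈ K, b₀ ≤ b x := fun x hx => hxbmin hx
  obtain ⟨xa, hxaK, hxamax⟩ := hKc.exists_isMaxOn ⟨q, hqK⟩ ha.abs
  set a₁ : ℝ := |a xa| with ha₁def
  have ha₁ : 0 ≤ a₁ := abs_nonneg _
  have ha₁le : ∀ x ∈ K, a x ≤ a₁ := fun x hx => (le_abs_self _).trans (hxamax hx)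
  obtain ⟨xc, hxcK, hxcmax⟩ := hKc.exists_isMaxOn ⟨q, hqK⟩ hc
  set c₁ : ℝ := c xc with hc₁def
  have hc₁ : 0 ≤ c₁ := hcpos xc hxcK
  have hc₁le : ∀ x ∈ K, c x ≤ c₁ := fun x hx => hxcmax hx
  -- constants
  set A : ℝ := (4 * (κ + 1) + 2 * (m:ℝ)) * T ^ 2 with hAdef
  have hA : 0 < A := by positivity
  set K₁ : ℝ := κ * A + a₁ * T ^ 4 with hK₁def
  have hK₁ : 0 < K₁ := by positivity
  set K₂ : ℝ := c₁ * ((T ^ 2) ^ (κ * (1 - τ)) * T ^ 4) with hK₂def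
  have hK₂ : 0 ≤ K₂ := by positivity
  set R : ℝ := (K₁ + K₂) / b₀ with hRdef
  set M : ℝ := max 1 (R ^ (1 / (σ - 1))) with hMdef
  have hM1 : (1:ℝ) ≤ M := le_max_left _ _
  set ε₀ : ℝ := T ^ 2 - T' ^ 2 with hε₀def
  have hε₀ : 0 < ε₀ := by
    have := pow_lt_pow_left₀ hT'T hT'0.le (n := 2) (by norm_num)
    simp only [hε₀def]; linarith
  clear_value K b₀ a₁ c₁ A K₁ K₂ R M ε₀
  refine ⟨max 1 (M / ε₀ ^ κ), lt_of_lt_of_le one_pos (le_max_left _ _), ?_⟩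
  intro u hu2 hupos hpde
  -- the weighted function F and its maximum point
  set F : EuclideanSpace ℝ (Fin m) → ℝ :=
    fun x => (T ^ 2 - dist x q ^ 2) ^ κ * u x with hFdef
  have hFcont : ContinuousOn F K := by
    apply ContinuousOn.mul _ (hu2.continuousOn)
    intro x hx
    apply ContinuousWithinAt.rpow_const
    · exact ((continuous_const.sub ((continuous_id.dist continuous_const).pow 2)).continuousWithinAt)
    · exact Or.inr hκ.le
  obtain ⟨x₀, hx₀K, hx₀max⟩ := hKc.exists_isMaxOn ⟨q, hqK⟩ hFcont
  have hmaxF : ∀ y ∈ K, F y ≤ F x₀ := fun y hy => hx₀max hy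
  set η₀ : ℝ := T ^ 2 - dist x₀ q ^ 2 with hη₀def
  set u₀ : ℝ := u x₀ with hu₀def
  have hu₀ : 0 < u₀ := hupos x₀ hx₀K
  have hFq : 0 < F q := by
    simp only [hFdef, dist_self]
    have : (0:ℝ) < (T ^ 2 - 0 ^ 2) ^ κ := by
      apply Real.rpow_pos_of_pos; norm_num; positivity
    have huq := hupos q hqK
    positivity
  have hF₀pos : 0 < F x₀ := lt_of_lt_of_le hFq (hmaxF q hqK)
  have hη₀nonneg : 0 ≤ η₀ := by
    have h1 : dist x₀ q ≤ T := by simpa [hK] using hx₀K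
    have := pow_le_pow_left₀ dist_nonneg h1 2
    simp only [hη₀def]; linarith
  have hη₀ : 0 < η₀ := by
    rcases hη₀nonneg.lt_or_eq with h | h
    · exact h
    · exfalso
      have : F x₀ = 0 := by
        simp only [hFdef, ← hη₀def, ← h, Real.zero_rpow hκ.ne', zero_mul]
      rw [this] at hF₀pos; exact lt_irrefl _ hF₀pos
  have hx₀ball : x₀ ∈ Metric.ball q T := by
    rw [Metric.mem_ball]
    by_contra hcon
    push_neg at hcon
    have : T ^ 2 ≤ dist x₀ q ^ 2 := pow_le_pow_left₀ hT0.le hcon 2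
    simp only [hη₀def] at hη₀; linarith
  set F₀ : ℝ := η₀ ^ κ * u₀ with hF₀def
  have hFx₀ : F x₀ = F₀ := rfl
  have hw₀ : 0 < η₀ ^ κ := Real.rpow_pos_of_pos hη₀ κ
  -- key directional estimate at x₀
  set P2 : ℝ := η₀ ^ (κ - 2) with hP2def
  have hP2 : 0 < P2 := Real.rpow_pos_of_pos hη₀ _
  have hE1 : η₀ ^ (κ - 1) = P2 * η₀ := by
    conv_lhs => rw [show κ - 1 = (κ - 2) + 1 by ring, Real.rpow_add hη₀, Real.rpow_one]
  have hE2 : η₀ ^ κ = P2 * η₀ * η₀ := by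
    conv_lhs => rw [show κ = (κ - 1) + 1 by ring, Real.rpow_add hη₀, Real.rpow_one]
    rw [hE1]
  clear_value F η₀ u₀ F₀ P2
  have key : ∀ i : Fin m,
      η₀ ^ κ * iteratedFDeriv ℝ 2 u x₀
          ![EuclideanSpace.single i 1, EuclideanSpace.single i 1]
        ≤ u₀ * (4 * κ * (κ + 1) *
            (inner ℝ (x₀ - q) (EuclideanSpace.single i (1:ℝ)) : ℝ) ^ 2 * P2
            + 2 * κ * P2 * η₀) := by
    intro i
    set e : EuclideanSpace ℝ (Fin m) := EuclideanSpace.single i (1:ℝ) with hedef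
    set d : ℝ := (inner ℝ (x₀ - q) e : ℝ) with hddef
    have hnorme : ‖e‖ = 1 := by rw [hedef]; simpa using EuclideanSpace.norm_single (𝕜 := ℝ) i 1
    set p : ℝ → ℝ := fun t => η₀ - 2 * d * t - t ^ 2 with hpdef
    have hdist : ∀ t : ℝ, dist (x₀ + t • e) q ^ 2 = dist x₀ q ^ 2 + 2 * d * t + t ^ 2 := by
      intro t
      rw [dist_eq_norm, dist_eq_norm]
      have h8 : x₀ + t • e - q = (x₀ - q) + t • e := by abel
      rw [h8, norm_add_sq_real, real_inner_smul_right, ← hddef, norm_smul, hnorme, mul_one,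
        Real.norm_eq_abs, sq_abs]
      ring
    have hp : ∀ t : ℝ, T ^ 2 - dist (x₀ + t • e) q ^ 2 = p t := by
      intro t
      rw [hdist t]
      simp only [hpdef]
      rw [hη₀def]; ring
    set δ : ℝ := T - dist x₀ q with hδdef
    have hδ : 0 < δ := by rw [hδdef]; exact sub_pos.2 (Metric.mem_ball.mp hx₀ball)
    have hmem : ∀ t : ℝ, |t| < δ → x₀ + t • e ∈ Metric.ball q T := by
      intro t ht
      rw [Metric.mem_ball]
      have hd1 : dist (x₀ + t • e) x₀ = |t| := by
        rw [dist_eq_norm, add_sub_cancel_left, norm_smul, hnorme, Real.norm_eq_abs, mul_one]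
      calc dist (x₀ + t • e) q ≤ dist (x₀ + t • e) x₀ + dist x₀ q := dist_triangle _ _ _
        _ < T := by rw [hd1]; rw [hδdef] at ht; linarith only [ht]
    have hppos : ∀ t : ℝ, |t| < δ → 0 < p t := by
      intro t ht
      have h2 := Metric.mem_ball.mp (hmem t ht)
      have h3 : (0:ℝ) ≤ dist (x₀ + t • e) q := dist_nonneg
      have h4 : dist (x₀ + t • e) q ^ 2 < T ^ 2 := by
        apply pow_lt_pow_left₀ h2 h3 two_ne_zero
      rw [← hp t]
      linarith only [h4]
    have h0δ : |(0:ℝ)| < δ := by simpa using hδ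
    have hu2' : ContDiffOn ℝ 2 u (Metric.closedBall q T) := hK ▸ hu2
    have hudiff : ∀ y ∈ Metric.ball q T, DifferentiableAt ℝ u y := by
      intro y hy
      exact ((hu2'.contDiffAt (Metric.closedBall_mem_nhds_of_mem hy)).differentiableAt
        (by norm_num))
    set U : ℝ → ℝ := fun t => u (x₀ + t • e) with hUdef
    set U' : ℝ → ℝ := fun t => fderiv ℝ u (x₀ + t • e) e with hU'def
    have hU : ∀ t : ℝ, |t| < δ → HasDerivAt U (U' t) t := fun t ht =>
      line_hasDerivAt e (hudiff _ (hmem t ht))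
    set DU : ℝ := iteratedFDeriv ℝ 2 u x₀ ![e, e] with hDUdef
    have hU'd : HasDerivAt U' DU 0 :=
      line_hasDerivAt_fderiv Metric.isOpen_ball hx₀ball
        (hu2'.mono Metric.ball_subset_closedBall) e
    set p' : ℝ → ℝ := fun t => -(2*d) - 2*t with hp'def
    have hpd : ∀ t : ℝ, HasDerivAt p (p' t) t := by
      intro t
      have h2 : HasDerivAt (fun s : ℝ => 2*d*s) (2*d) t := by
        simpa using (hasDerivAt_id t).const_mul (2*d)
      have h3 : HasDerivAt (fun s : ℝ => s^2) (2*t) t := by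
        simpa using hasDerivAt_pow 2 t
      have h4 := ((hasDerivAt_const t η₀).sub h2).sub h3
      have h6 : p' t = (0 - 2*d) - 2*t := by rw [hp'def]; ring
      rw [h6]; exact h4
    have hp'd : ∀ t : ℝ, HasDerivAt p' (-2) t := by
      intro t
      have h2 : HasDerivAt (fun s : ℝ => 2*s) 2 t := by
        simpa using (hasDerivAt_id t).const_mul (2:ℝ)
      have h4 := (hasDerivAt_const t (-(2*d))).sub h2
      have h6 : (-2 : ℝ) = 0 - 2 := by ring
      rw [h6]; exact h4
    set W : ℝ → ℝ := fun t => p t ^ κ with hWdef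
    set W' : ℝ → ℝ := fun t => p' t * κ * p t ^ (κ - 1) with hW'def
    have hW : ∀ t : ℝ, |t| < δ → HasDerivAt W (W' t) t := fun t ht =>
      (hpd t).rpow_const (Or.inl (hppos t ht).ne')
    set DW : ℝ := -2 * κ * p 0 ^ (κ-1) + p' 0 * κ * (p' 0 * (κ-1) * p 0 ^ (κ-1-1)) with hDWdef
    have hW'd : HasDerivAt W' DW 0 := by
      have h1 : HasDerivAt (fun t : ℝ => p' t * κ) (-2 * κ) 0 := (hp'd 0).mul_const κ
      have h2 : HasDerivAt (fun t : ℝ => p t ^ (κ-1)) (p' 0 * (κ-1) * p 0 ^ (κ-1-1)) 0 :=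
        (hpd 0).rpow_const (Or.inl (hppos 0 h0δ).ne')
      exact h1.mul h2
    set g : ℝ → ℝ := fun t => W t * U t with hgdef
    set G' : ℝ → ℝ := fun t => W' t * U t + W t * U' t with hG'def
    have hgd : ∀ᶠ t in nhds (0:ℝ), HasDerivAt g (G' t) t := by
      rw [Metric.eventually_nhds_iff]
      refine ⟨δ, hδ, fun {t} ht => ?_⟩
      have ht' : |t| < δ := by simpa [Real.dist_eq] using ht
      exact (hW t ht').mul (hU t ht')
    have hG'd : HasDerivAt G' (DW * U 0 + W' 0 * U' 0 + (W' 0 * U' 0 + W 0 * DU)) 0 :=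
      (hW'd.mul (hU 0 h0δ)).add ((hW 0 h0δ).mul hU'd)
    have hgF : ∀ t : ℝ, g t = F (x₀ + t • e) := by
      intro t
      simp only [hgdef, hWdef, hUdef, hFdef]
      rw [hp t]
    have hg0 : g 0 = F x₀ := by rw [hgF 0]; simp
    have hlocmax : IsLocalMax g 0 := by
      have hev : ∀ᶠ t in nhds (0:ℝ), g t ≤ g 0 := by
        rw [Metric.eventually_nhds_iff]
        refine ⟨δ, hδ, fun {t} ht => ?_⟩
        have ht' : |t| < δ := by simpa [Real.dist_eq] using ht
        rw [hgF t, hg0]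
        refine hmaxF _ ?_
        rw [hK]
        exact Metric.ball_subset_closedBall (hmem t ht')
      exact hev
    have hd2 := second_deriv_nonpos_of_isLocalMax hgd hG'd hlocmax
    have hcrit : G' 0 = 0 := hlocmax.hasDerivAt_eq_zero hgd.self_of_nhds
    have hp0 : p 0 = η₀ := by simp only [hpdef]; ring
    have hp'0 : p' 0 = -(2*d) := by simp only [hp'def]; ring
    have hU0 : U 0 = u₀ := by simp only [hUdef]; rw [hu₀def]; simp
    have hW0 : W 0 = P2 * η₀ * η₀ := by simp only [hWdef]; rw [hp0]; exact hE2
    have hW'0 : W' 0 = -(2*d) * κ * (P2 * η₀) := by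
      simp only [hW'def]; rw [hp0, hp'0, hE1]
    have hDWv : DW = -2 * κ * (P2 * η₀) + -(2*d) * κ * (-(2*d) * (κ-1) * P2) := by
      rw [hDWdef, hp0, hp'0, hE1, show κ - 1 - 1 = κ - 2 by ring, ← hP2def]
    have hcrit2 : -(2*d) * κ * (P2 * η₀) * u₀ + (P2 * η₀ * η₀) * U' 0 = 0 := by
      have h := hcrit
      simp only [hG'def] at h
      rw [hW'0, hU0, hW0] at h
      exact h
    have hX : (P2 * η₀ * η₀) * U' 0 = 2 * d * κ * (P2 * η₀) * u₀ := by
      linarith only [hcrit2]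
    have hX4 : 4*d*κ*((P2 * η₀ * η₀) * U' 0) = 4*d*κ*(2 * d * κ * (P2 * η₀) * u₀) := by
      rw [hX]
    rw [hDWv, hW'0, hU0, hW0] at hd2
    have hd2m := mul_le_mul_of_nonneg_left hd2 hη₀.le
    rw [mul_zero] at hd2m
    rw [hE2]
    refine le_of_mul_le_mul_left ?_ hη₀
    linarith only [hd2m, hX4]
  -- summed estimate
  have hsum_inner : ∑ i : Fin m,
      (inner ℝ (x₀ - q) (EuclideanSpace.single i (1:ℝ)) : ℝ) ^ 2 = dist x₀ q ^ 2 := by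
    have hv : ∀ i : Fin m,
        (inner ℝ (x₀ - q) (EuclideanSpace.single i (1:ℝ)) : ℝ) = (x₀ - q) i := by
      intro i; simp [EuclideanSpace.inner_single_right]
    simp_rw [hv]
    rw [dist_eq_norm, EuclideanSpace.norm_eq, Real.sq_sqrt (by positivity)]
    apply Finset.sum_congr rfl
    intro i _
    rw [Real.norm_eq_abs, sq_abs]
  have hlap : η₀ ^ κ * lap u x₀ ≤
      u₀ * κ * P2 * (4 * (κ + 1) * dist x₀ q ^ 2 + 2 * (m:ℝ) * η₀) := by
    have h1 : η₀ ^ κ * lap u x₀ = ∑ i : Fin m, η₀ ^ κ * iteratedFDeriv ℝ 2 u x₀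
        ![EuclideanSpace.single i 1, EuclideanSpace.single i 1] := by
      simp only [lap, Finset.mul_sum]
    rw [h1]
    calc ∑ i : Fin m, η₀ ^ κ * iteratedFDeriv ℝ 2 u x₀
          ![EuclideanSpace.single i 1, EuclideanSpace.single i 1]
        ≤ ∑ i : Fin m, u₀ * (4 * κ * (κ + 1) *
            (inner ℝ (x₀ - q) (EuclideanSpace.single i (1:ℝ)) : ℝ) ^ 2 * P2
            + 2 * κ * P2 * η₀) := Finset.sum_le_sum fun i _ => key i
      _ = (u₀ * κ * P2 * (4 * (κ + 1))) * (∑ i : Fin m,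
            (inner ℝ (x₀ - q) (EuclideanSpace.single i (1:ℝ)) : ℝ) ^ 2)
            + (m:ℝ) * (u₀ * κ * P2 * (2 * η₀)) := by
          have expand : ∀ i : Fin m, u₀ * (4 * κ * (κ + 1) *
              (inner ℝ (x₀ - q) (EuclideanSpace.single i (1:ℝ)) : ℝ) ^ 2 * P2
              + 2 * κ * P2 * η₀) = (u₀ * κ * P2 * (4 * (κ + 1))) *
              (inner ℝ (x₀ - q) (EuclideanSpace.single i (1:ℝ)) : ℝ) ^ 2
              + u₀ * κ * P2 * (2 * η₀) := fun i => by ring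
          simp_rw [expand]
          rw [Finset.sum_add_distrib, ← Finset.mul_sum, Finset.sum_const,
            Finset.card_univ, Fintype.card_fin, nsmul_eq_mul]
      _ = u₀ * κ * P2 * (4 * (κ + 1) * dist x₀ q ^ 2 + 2 * (m:ℝ) * η₀) := by
          rw [hsum_inner]; ring
  -- the algebraic chase
  have hFM : F₀ ≤ M := by
    have hF₀' : 0 < F₀ := by rw [hF₀def]; exact mul_pos hw₀ hu₀
    have hpde0 := hpde x₀ hx₀ball
    rw [← hu₀def] at hpde0
    have huσ : 0 < u₀ ^ σ := Real.rpow_pos_of_pos hu₀ σ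
    have huτ : 0 < u₀ ^ τ := Real.rpow_pos_of_pos hu₀ τ
    have hρT : dist x₀ q ^ 2 ≤ T ^ 2 :=
      pow_le_pow_left₀ dist_nonneg (by simpa [hK] using hx₀K) 2
    have hηT2 : η₀ ≤ T ^ 2 := by
      rw [hη₀def]; exact sub_le_self _ (by positivity)
    have hη2T4 : η₀ ^ 2 ≤ T ^ 4 := by
      have h := pow_le_pow_left₀ hη₀nonneg hηT2 2
      calc η₀ ^ 2 ≤ (T ^ 2) ^ 2 := h
        _ = T ^ 4 := by ring
    -- step 1
    have step1 : b₀ * u₀ ^ σ ≤ lap u x₀ + a₁ * u₀ + c₁ * u₀ ^ τ := by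
      have hb' : b₀ * u₀ ^ σ ≤ b x₀ * u₀ ^ σ :=
        mul_le_mul_of_nonneg_right (hb₀le x₀ hx₀K) huσ.le
      have h2 : a x₀ * u₀ ≤ a₁ * u₀ := mul_le_mul_of_nonneg_right (ha₁le x₀ hx₀K) hu₀.le
      have h3 : c x₀ * u₀ ^ τ ≤ c₁ * u₀ ^ τ :=
        mul_le_mul_of_nonneg_right (hc₁le x₀ hx₀K) huτ.le
      linarith only [hpde0, hb', h2, h3]
    -- laplacian piece
    have hB : 4 * (κ + 1) * dist x₀ q ^ 2 + 2 * (m:ℝ) * η₀ ≤ A := by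
      have e1 : 4 * (κ + 1) * dist x₀ q ^ 2 ≤ 4 * (κ + 1) * T ^ 2 :=
        mul_le_mul_of_nonneg_left hρT (by positivity)
      have e2 : 2 * (m:ℝ) * η₀ ≤ 2 * (m:ℝ) * T ^ 2 :=
        mul_le_mul_of_nonneg_left hηT2 (by positivity)
      simp only [hAdef]; linarith only [e1, e2]
    have pieceLap : η₀ ^ 2 * (η₀ ^ κ * lap u x₀) ≤ κ * A * F₀ := by
      have e1 : η₀ ^ 2 * (η₀ ^ κ * lap u x₀) ≤
          η₀ ^ 2 * (u₀ * κ * P2 * (4 * (κ + 1) * dist x₀ q ^ 2 + 2 * (m:ℝ) * η₀)) :=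
        mul_le_mul_of_nonneg_left hlap (by positivity)
      have e2 : η₀ ^ 2 * (u₀ * κ * P2 * (4 * (κ + 1) * dist x₀ q ^ 2 + 2 * (m:ℝ) * η₀)) ≤
          η₀ ^ 2 * (u₀ * κ * P2 * A) := by
        apply mul_le_mul_of_nonneg_left _ (by positivity)
        exact mul_le_mul_of_nonneg_left hB (by positivity)
      have e3 : η₀ ^ 2 * (u₀ * κ * P2 * A) = κ * A * F₀ := by
        rw [hF₀def, hE2]; ring
      linarith only [e1, e2, e3]
    -- conclusion of the main inequality
    have hFσ : F₀ ^ σ = η₀ ^ κ * η₀ ^ 2 * u₀ ^ σ := by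
      rw [hF₀def, Real.mul_rpow hw₀.le hu₀.le, ← Real.rpow_mul hη₀.le, hκσ,
        Real.rpow_add hη₀, show (2:ℝ) = ((2:ℕ):ℝ) by norm_num, Real.rpow_natCast]
    have hFτ : F₀ ^ τ = η₀ ^ (κ * τ) * u₀ ^ τ := by
      rw [hF₀def, Real.mul_rpow hw₀.le hu₀.le, ← Real.rpow_mul hη₀.le]
    have hFτpos : 0 < F₀ ^ τ := Real.rpow_pos_of_pos hF₀' τ
    have hsplit : η₀ ^ κ = η₀ ^ (κ * (1 - τ)) * η₀ ^ (κ * τ) := by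
      rw [← Real.rpow_add hη₀, show κ * (1 - τ) + κ * τ = κ by ring]
    have hQ : η₀ ^ (κ * (1 - τ)) ≤ (T ^ 2) ^ (κ * (1 - τ)) :=
      Real.rpow_le_rpow hη₀.le hηT2 (mul_nonneg hκ.le (by linarith))
    have main : b₀ * F₀ ^ σ ≤ K₁ * F₀ + K₂ * F₀ ^ τ := by
      have s2 : η₀ ^ κ * η₀ ^ 2 * (b₀ * u₀ ^ σ) ≤
          η₀ ^ κ * η₀ ^ 2 * (lap u x₀ + a₁ * u₀ + c₁ * u₀ ^ τ) :=
        mul_le_mul_of_nonneg_left step1 (by positivity)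
      have pieceA : η₀ ^ κ * η₀ ^ 2 * (a₁ * u₀) ≤ a₁ * T ^ 4 * F₀ := by
        have : η₀ ^ κ * η₀ ^ 2 * (a₁ * u₀) = a₁ * η₀ ^ 2 * F₀ := by rw [hF₀def]; ring
        rw [this]
        apply mul_le_mul_of_nonneg_right _ hF₀'.le
        exact mul_le_mul_of_nonneg_left hη2T4 ha₁
      have pieceC : η₀ ^ κ * η₀ ^ 2 * (c₁ * u₀ ^ τ) ≤ K₂ * F₀ ^ τ := by
        have e1 : η₀ ^ κ * η₀ ^ 2 * (c₁ * u₀ ^ τ) =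
            c₁ * (η₀ ^ (κ * (1 - τ)) * η₀ ^ 2) * F₀ ^ τ := by
          rw [hFτ]
          calc η₀ ^ κ * η₀ ^ 2 * (c₁ * u₀ ^ τ)
              = c₁ * (η₀ ^ κ * η₀ ^ 2) * u₀ ^ τ := by ring
            _ = c₁ * (η₀ ^ (κ * (1 - τ)) * η₀ ^ 2) * (η₀ ^ (κ * τ) * u₀ ^ τ) := by
                rw [hsplit]; ring
        rw [e1, hK₂def]
        apply mul_le_mul_of_nonneg_right _ hFτpos.le
        apply mul_le_mul_of_nonneg_left _ hc₁
        exact mul_le_mul hQ hη2T4 (by positivity) (by positivity)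
      have lhs_eq : η₀ ^ κ * η₀ ^ 2 * (b₀ * u₀ ^ σ) = b₀ * F₀ ^ σ := by
        rw [hFσ]; ring
      have rhs_split : η₀ ^ κ * η₀ ^ 2 * (lap u x₀ + a₁ * u₀ + c₁ * u₀ ^ τ) =
          η₀ ^ 2 * (η₀ ^ κ * lap u x₀) + η₀ ^ κ * η₀ ^ 2 * (a₁ * u₀)
          + η₀ ^ κ * η₀ ^ 2 * (c₁ * u₀ ^ τ) := by ring
      rw [lhs_eq, rhs_split] at s2
      simp only [hK₁def]
      linarith only [pieceLap, pieceA, pieceC, s2]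
    rcases le_or_gt F₀ 1 with hF1 | hF1
    · exact hF1.trans hM1
    · have hτle : F₀ ^ τ ≤ F₀ := by
        calc F₀ ^ τ ≤ F₀ ^ (1:ℝ) := Real.rpow_le_rpow_of_exponent_le hF1.le hτ.le
          _ = F₀ := Real.rpow_one _
      have h2 : b₀ * F₀ ^ σ ≤ (K₁ + K₂) * F₀ := by
        have h2' : K₂ * F₀ ^ τ ≤ K₂ * F₀ := mul_le_mul_of_nonneg_left hτle hK₂
        linarith only [h2', main]
      have hσsplit : F₀ ^ σ = F₀ ^ (σ - 1) * F₀ := by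
        conv_lhs => rw [show σ = (σ - 1) + 1 by ring, Real.rpow_add hF₀', Real.rpow_one]
      have h3 : b₀ * F₀ ^ (σ - 1) * F₀ ≤ (K₁ + K₂) * F₀ := by
        calc b₀ * F₀ ^ (σ - 1) * F₀ = b₀ * F₀ ^ σ := by rw [hσsplit]; ring
          _ ≤ (K₁ + K₂) * F₀ := h2
      have h4 : b₀ * F₀ ^ (σ - 1) ≤ K₁ + K₂ := le_of_mul_le_mul_right h3 hF₀'
      have h5 : F₀ ^ (σ - 1) ≤ R := by
        rw [hRdef, le_div_iff₀ hb₀]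
        linarith only [h4]
      have h6 : F₀ ≤ R ^ (1 / (σ - 1)) := by
        have h7 : (F₀ ^ (σ - 1)) ^ (1 / (σ - 1)) ≤ R ^ (1 / (σ - 1)) :=
          Real.rpow_le_rpow (Real.rpow_nonneg hF₀'.le _) h5 (by positivity)
        calc F₀ = (F₀ ^ (σ - 1)) ^ (1 / (σ - 1)) := by
              rw [← Real.rpow_mul hF₀'.le, mul_one_div, div_self hσ1.ne', Real.rpow_one]
          _ ≤ R ^ (1 / (σ - 1)) := h7
      refine h6.trans ?_
      rw [hMdef]
      exact le_max_right _ _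
  -- conclusion
  intro x hxΩ
  have hxT' : x ∈ Metric.ball q T' := hΩ hxΩ
  have hxK : x ∈ K := by
    have : dist x q < T' := by simpa using hxT'
    simp only [hK, Metric.mem_closedBall]
    linarith
  have hηx : ε₀ ≤ T ^ 2 - dist x q ^ 2 := by
    have h1 : dist x q ≤ T' := le_of_lt (by simpa using hxT')
    have := pow_le_pow_left₀ dist_nonneg h1 2
    simp only [hε₀def]; linarith
  have hux : 0 < u x := hupos x hxK
  have h1 : ε₀ ^ κ * u x ≤ F x := by
    simp only [hFdef]
    apply mul_le_mul_of_nonneg_right _ hux.le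
    exact Real.rpow_le_rpow hε₀.le hηx hκ.le
  have h2 : F x ≤ M := (hmaxF x hxK).trans (hFx₀ ▸ hFM)
  have hεκ : 0 < ε₀ ^ κ := Real.rpow_pos_of_pos hε₀ κ
  have : u x ≤ M / ε₀ ^ κ := by
    rw [le_div_iff₀ hεκ]
    calc u x * ε₀ ^ κ = ε₀ ^ κ * u x := by ring
    _ ≤ F x := h1
    _ ≤ M := h2
  exact this.trans (le_max_right _ _)
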